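/- arXiv:2409.09757 — 11 statements merged into one kernel-verified Lean document; each statement's English description precedes it below -/
import Mathlib

section
/- Let M be a commutative monoid with zero. Then an ideal L of M is irreducible if and only if it is strongly irreducible. (The nontrivial direction: if L = I ∩ J forces L = I or L = J for all ideals I, J, then I ∩ J ⊆ L forces I ⊆ L or J ⊆ L for all ideals I, J.) -/
/-- An ideal of a commutative monoid: a nonempty subset `I` such that
`i ∈ I` and `m ∈ N` imply `i * m ∈ I`. -/
def IsIdeal {N : Type*} [CommMonoid N] (I : Set N) : Prop :=
  I.Nonempty ∧ ∀ i ∈ I, ∀ m : N, i * m ∈ I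

/-- The irreducibility condition on an ideal `L`: whenever `L = I ∩ J` for
ideals `I`, `J`, then `L = I` or `L = J`. -/
def IrredCond {N : Type*} [CommMonoid N] (L : Set N) : Prop :=
  ∀ I J : Set N, IsIdeal I → IsIdeal J → L = I ∩ J → L = I ∨ L = J

/-- The strong irreducibility condition on an ideal `L`: whenever
`I ∩ J ⊆ L` for ideals `I`, `J`, then `I ⊆ L` or `J ⊆ L`. -/
def StrIrredCond {N : Type*} [CommMonoid N] (L : Set N) : Prop :=
  ∀ I J : Set N, IsIdeal I → IsIdeal J → I ∩ J ⊆ L → I ⊆ L ∨ J ⊆ L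

/-- The radical of a subset `I`: all elements some positive power of which
lies in `I`. -/
def radicalSet {N : Type*} [CommMonoid N] (I : Set N) : Set N :=
  {m : N | ∃ k : ℕ, 0 < k ∧ m ^ k ∈ I}

/-- A primary ideal: a proper ideal `I` such that `x * y ∈ I` implies
`x ∈ I` or `y ^ k ∈ I` for some positive integer `k`. -/
def IsPrimaryIdeal {N : Type*} [CommMonoid N] (I : Set N) : Prop :=
  IsIdeal I ∧ I ≠ Set.univ ∧
    ∀ x y : N, x * y ∈ I → x ∈ I ∨ ∃ k : ℕ, 0 < k ∧ y ^ k ∈ I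

lemma isIdeal_union {N : Type*} [CommMonoid N] {I J : Set N}
    (hI : IsIdeal I) (hJ : IsIdeal J) : IsIdeal (I ∪ J) := by
  constructor
  · exact hI.1.mono Set.subset_union_left
  · rintro i (hi | hi) m
    · exact Or.inl (hI.2 i hi m)
    · exact Or.inr (hJ.2 i hi m)

/-- In a commutative monoid with zero, an ideal is irreducible iff it is
strongly irreducible. -/
theorem irreducible_iff_strongly_irreducible {M : Type*} [CommMonoidWithZero M]
    (L : Set M) (hL : IsIdeal L) :
    IrredCond L ↔ StrIrredCond L := by
  constructor
  · intro h I J hI hJ hIJ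
    have key : L = (L ∪ I) ∩ (L ∪ J) := by
      apply Set.Subset.antisymm
      · exact Set.subset_inter (Set.subset_union_left) (Set.subset_union_left)
      · rintro x ⟨hx1 | hx1, hx2 | hx2⟩
        · exact hx1
        · exact hx1
        · exact hx2
        · exact hIJ ⟨hx1, hx2⟩
    rcases h _ _ (isIdeal_union hL hI) (isIdeal_union hL hJ) key with h' | h'
    · exact Or.inl fun x hx => h' ▸ Or.inr hx
    · exact Or.inr fun x hx => h' ▸ Or.inr hx
  · intro h I J hI hJ hLIJ
    rcases h I J hI hJ (hLIJ ▸ Set.Subset.rfl) with h' | h'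
    · exact Or.inl (Set.Subset.antisymm (hLIJ ▸ Set.inter_subset_left) h')
    · exact Or.inr (Set.Subset.antisymm (hLIJ ▸ Set.inter_subset_right) h')
end

section
/- Let M be a commutative monoid with zero. An ideal I of M is irreducible if and only if for all m, m' ∈ M, ⟨m⟩ ∩ ⟨m'⟩ ⊆ I implies m ∈ I or m' ∈ I, where ⟨m⟩ = {m*x : x ∈ M} is the ideal generated by m. -/
/-- An ideal `I` of a commutative monoid with zero is irreducible iff
`⟨m⟩ ∩ ⟨m'⟩ ⊆ I` implies `m ∈ I` or `m' ∈ I`, for all `m, m' ∈ M`, where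
`⟨m⟩ = {m * x : x ∈ M}`. -/
theorem irreducible_iff_elementwise {M : Type*} [CommMonoidWithZero M]
    (I : Set M) (hI : IsIdeal I) :
    IrredCond I ↔
    (∀ m m' : M,
      {x : M | ∃ y : M, x = m * y} ∩ {x : M | ∃ y : M, x = m' * y} ⊆ I →
      m ∈ I ∨ m' ∈ I) := by
  constructor
  · intro h m m' hsub
    set A : Set M := {x : M | ∃ y : M, x = m * y} with hA
    set B : Set M := {x : M | ∃ y : M, x = m' * y} with hB
    have hJ : IsIdeal (I ∪ A) := by
      refine ⟨⟨m, Or.inr ⟨1, (mul_one m).symm⟩⟩, ?_⟩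
      rintro i (hi | ⟨y, rfl⟩) n
      · exact Or.inl (hI.2 i hi n)
      · exact Or.inr ⟨y * n, mul_assoc _ _ _⟩
    have hK : IsIdeal (I ∪ B) := by
      refine ⟨⟨m', Or.inr ⟨1, (mul_one m').symm⟩⟩, ?_⟩
      rintro i (hi | ⟨y, rfl⟩) n
      · exact Or.inl (hI.2 i hi n)
      · exact Or.inr ⟨y * n, mul_assoc _ _ _⟩
    have heq : I = (I ∪ A) ∩ (I ∪ B) := by
      apply Set.Subset.antisymm
      · intro x hx; exact ⟨Or.inl hx, Or.inl hx⟩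
      · rintro x ⟨hx1 | hx1, hx2 | hx2⟩
        · exact hx1
        · exact hx1
        · exact hx2
        · exact hsub ⟨hx1, hx2⟩
    rcases h _ _ hJ hK heq with hIJ | hIK
    · exact Or.inl (hIJ ▸ Or.inr ⟨1, (mul_one m).symm⟩)
    · exact Or.inr (hIK ▸ Or.inr ⟨1, (mul_one m').symm⟩)
  · intro h J K hJ hK heq
    by_contra hc
    push_neg at hc
    obtain ⟨hc1, hc2⟩ := hc
    have hIJ : I ⊆ J := fun x hx => (heq ▸ hx).1
    have hIK : I ⊆ K := fun x hx => (heq ▸ hx).2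
    obtain ⟨a, haJ, haI⟩ : ∃ a, a ∈ J ∧ a ∉ I := by
      by_contra hn; push_neg at hn
      exact hc1 (Set.Subset.antisymm hIJ hn)
    obtain ⟨b, hbK, hbI⟩ : ∃ b, b ∈ K ∧ b ∉ I := by
      by_contra hn; push_neg at hn
      exact hc2 (Set.Subset.antisymm hIK hn)
    have hsub : {x : M | ∃ y : M, x = a * y} ∩ {x : M | ∃ y : M, x = b * y} ⊆ I := by
      rintro x ⟨⟨y, rfl⟩, ⟨z, hz⟩⟩
      have h1 : a * y ∈ J := hJ.2 a haJ y
      have h2 : a * y ∈ K := hz ▸ hK.2 b hbK z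
      exact heq ▸ Set.mem_inter h1 h2
    rcases h a b hsub with h' | h'
    · exact haI h'
    · exact hbI h'
end

section
/- Let M be a commutative monoid with zero. Then every proper ideal of M is irreducible if and only if any two ideals of M are comparable under inclusion (i.e., the ideals of M form a chain). -/
/-- Every proper ideal of a commutative monoid with zero is irreducible iff
any two ideals are comparable under inclusion. -/
theorem all_proper_irreducible_iff_chain {M : Type*} [CommMonoidWithZero M] :
    (∀ L : Set M, IsIdeal L → L ≠ Set.univ → IrredCond L) ↔
    (∀ I J : Set M, IsIdeal I → IsIdeal J → I ⊆ J ∨ J ⊆ I) := by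
  constructor
  · intro h I J hI hJ
    have hL : IsIdeal (I ∩ J) := by
      constructor
      · obtain ⟨i, hi⟩ := hI.1
        obtain ⟨j, hj⟩ := hJ.1
        exact ⟨i * j, hI.2 i hi j, by rw [mul_comm]; exact hJ.2 j hj i⟩
      · intro x hx m
        exact ⟨hI.2 x hx.1 m, hJ.2 x hx.2 m⟩
    by_cases hu : I ∩ J = Set.univ
    · left
      intro x _
      have hx : x ∈ I ∩ J := hu.symm ▸ Set.mem_univ x
      exact hx.2
    · rcases h (I ∩ J) hL hu I J hI hJ rfl with h1 | h1
      · left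
        intro x hx
        exact ((Set.ext_iff.mp h1 x).mpr hx).2
      · right
        intro x hx
        exact ((Set.ext_iff.mp h1 x).mpr hx).1
  · intro h L hL hLne I J hI hJ hLIJ
    rcases h I J hI hJ with hc | hc
    · left; rw [hLIJ, Set.inter_eq_left.mpr hc]
    · right; rw [hLIJ, Set.inter_eq_right.mpr hc]
end

section
/- Let M be a commutative monoid with zero and P a proper ideal of M. Then P is prime if and only if P is both semiprime and irreducible. -/
/-- A proper ideal `P` of a commutative monoid with zero is prime iff it is
both semiprime and irreducible. -/
theorem prime_iff_semiprime_and_irreducible {M : Type*} [CommMonoidWithZero M]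
    (P : Set M) (hP : IsIdeal P) (hproper : P ≠ Set.univ) :
    (∀ x y : M, x * y ∈ P → x ∈ P ∨ y ∈ P) ↔
    (radicalSet P = P ∧ IrredCond P) := by
  constructor
  · intro hprime
    constructor
    · ext m
      constructor
      · rintro ⟨k, hk, hmk⟩
        induction k with
        | zero => omega
        | succ n ih =>
          rcases Nat.eq_zero_or_pos n with h0 | hpos
          · subst h0; simpa using hmk
          · rw [pow_succ] at hmk
            rcases hprime _ _ hmk with h | h
            · exact ih hpos h
            · exact h
      · intro hm; exact ⟨1, one_pos, by simpa⟩
    · intro I J hI hJ hPIJ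
      by_contra hcon
      push_neg at hcon
      obtain ⟨hPI, hPJ⟩ := hcon
      have hsubI : P ⊆ I := hPIJ ▸ Set.inter_subset_left
      have hsubJ : P ⊆ J := hPIJ ▸ Set.inter_subset_right
      obtain ⟨i, hiI, hiP⟩ : ∃ i, i ∈ I ∧ i ∉ P := by
        by_contra h; push_neg at h
        exact hPI (Set.Subset.antisymm hsubI h)
      obtain ⟨j, hjJ, hjP⟩ : ∃ j, j ∈ J ∧ j ∉ P := by
        by_contra h; push_neg at h
        exact hPJ (Set.Subset.antisymm hsubJ h)
      have hij : i * j ∈ P := by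
        rw [hPIJ]
        exact ⟨hI.2 i hiI j, by rw [mul_comm]; exact hJ.2 j hjJ i⟩
      rcases hprime i j hij with h | h
      · exact hiP h
      · exact hjP h
  · rintro ⟨hrad, hirr⟩ x y hxy
    by_contra hcon
    push_neg at hcon
    obtain ⟨hx, hy⟩ := hcon
    set I : Set M := P ∪ {z | ∃ m, z = x * m} with hIdef
    set J : Set M := P ∪ {z | ∃ m, z = y * m} with hJdef
    have hIideal : IsIdeal I := by
      refine ⟨⟨x, Or.inr ⟨1, (mul_one x).symm⟩⟩, ?_⟩
      rintro i (hi | ⟨m, rfl⟩) n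
      · exact Or.inl (hP.2 i hi n)
      · exact Or.inr ⟨m * n, mul_assoc _ _ _⟩
    have hJideal : IsIdeal J := by
      refine ⟨⟨y, Or.inr ⟨1, (mul_one y).symm⟩⟩, ?_⟩
      rintro i (hi | ⟨m, rfl⟩) n
      · exact Or.inl (hP.2 i hi n)
      · exact Or.inr ⟨m * n, mul_assoc _ _ _⟩
    have hPeq : P = I ∩ J := by
      apply Set.Subset.antisymm
      · intro p hp; exact ⟨Or.inl hp, Or.inl hp⟩
      · rintro z ⟨hzI, hzJ⟩
        rcases hzI with h | ⟨m, rfl⟩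
        · exact h
        rcases hzJ with h | ⟨n, he⟩
        · exact h
        have hsq : (x * m) ^ 2 ∈ P := by
          have heq : (x * m) ^ 2 = (x * y) * (m * n) := by
            rw [sq]; nth_rewrite 2 [he]
            rw [mul_mul_mul_comm]
          rw [heq]
          exact hP.2 _ hxy _
        have hr : x * m ∈ radicalSet P := ⟨2, by norm_num, hsq⟩
        rwa [hrad] at hr
    rcases hirr I J hIideal hJideal hPeq with h | h
    · exact hx (by rw [h]; exact Or.inr ⟨1, (mul_one x).symm⟩)
    · exact hy (by rw [h]; exact Or.inr ⟨1, (mul_one y).symm⟩)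
end

section
/- Let M be a commutative monoid with zero, S a submonoid of M, and let M_S denote the localization of M at S. If I is a proper strongly irreducible ideal of M_S, then its contraction I^c = {m ∈ M : mk(m,1) ∈ I} is a strongly irreducible proper ideal of M that is disjoint from S. -/
/-- The contraction of a proper strongly irreducible ideal of the
localization `M_S` is a proper strongly irreducible ideal of `M` disjoint
from `S`. -/
theorem contraction_strongly_irreducible {M : Type*} [CommMonoidWithZero M]
    (S : Submonoid M) (I : Set (Localization S))
    (hI : IsIdeal I) (hproper : I ≠ Set.univ) (hstr : StrIrredCond I) :
    IsIdeal {m : M | Localization.mk m 1 ∈ I} ∧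
    {m : M | Localization.mk m 1 ∈ I} ≠ Set.univ ∧
    StrIrredCond {m : M | Localization.mk m 1 ∈ I} ∧
    {m : M | Localization.mk m 1 ∈ I} ∩ (S : Set M) = ∅ := by
  obtain ⟨⟨x0, hx0⟩, hImul⟩ := hI
  -- 0 ∈ I
  have hzero : (0 : Localization S) ∈ I := by
    have := hImul x0 hx0 0
    rwa [mul_zero] at this
  -- disjointness
  have hdisj : {m : M | Localization.mk m 1 ∈ I} ∩ (S : Set M) = ∅ := by
    rw [Set.eq_empty_iff_forall_notMem]
    rintro s ⟨hs1, hs2⟩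
    apply hproper
    ext x
    simp only [Set.mem_univ, iff_true]
    induction x using Localization.induction_on with
    | H y =>
      obtain ⟨a, t⟩ := y
      have := hImul _ hs1 (Localization.mk a (t * ⟨s, hs2⟩))
      rw [Localization.mk_mul] at this
      have heq : Localization.mk (s * a) (1 * (t * ⟨s, hs2⟩)) = Localization.mk a t := by
        rw [Localization.mk_eq_mk_iff, Localization.r_iff_exists]
        refine ⟨1, ?_⟩
        push_cast
        simp [mul_comm, mul_assoc, mul_left_comm]
      rwa [heq] at this
  refine ⟨⟨⟨0, by show Localization.mk 0 1 ∈ I; rw [Localization.mk_zero]; exact hzero⟩, ?_⟩, ?_, ?_, hdisj⟩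
  · intro i hi m
    have := hImul _ hi (Localization.mk m 1)
    rwa [Localization.mk_mul, one_mul] at this
  · intro h
    have h1 : (1 : M) ∈ {m : M | Localization.mk m 1 ∈ I} ∩ (S : Set M) := by
      rw [h]; exact ⟨trivial, S.one_mem⟩
    rw [hdisj] at h1
    exact h1
  · intro A B hA hB hsub
    -- extensions
    set Ae : Set (Localization S) := {x | ∃ a ∈ A, ∃ s : S, x = Localization.mk a s} with hAe
    set Be : Set (Localization S) := {x | ∃ b ∈ B, ∃ t : S, x = Localization.mk b t} with hBe
    have hideal : ∀ (C : Set M), IsIdeal C →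
        IsIdeal {x : Localization S | ∃ c ∈ C, ∃ s : S, x = Localization.mk c s} := by
      rintro C ⟨⟨c0, hc0⟩, hCmul⟩
      refine ⟨⟨Localization.mk c0 1, c0, hc0, 1, rfl⟩, ?_⟩
      rintro i ⟨c, hc, s, rfl⟩ m
      induction m using Localization.induction_on with
      | H y =>
        obtain ⟨a, t⟩ := y
        exact ⟨c * a, hCmul c hc a, s * t, by rw [Localization.mk_mul]⟩
    have hkey : Ae ∩ Be ⊆ I := by
      rintro x ⟨⟨a, ha, s, rfl⟩, ⟨b, hb, t, hx⟩⟩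
      rw [Localization.mk_eq_mk_iff, Localization.r_iff_exists] at hx
      obtain ⟨c, hc⟩ := hx
      dsimp at hc
      -- d := c * t * a ∈ A ∩ B
      have hdA : (c : M) * t * a ∈ A := by
        have := hA.2 a ha ((c : M) * t)
        rwa [mul_comm] at this
      have hdB : (c : M) * t * a ∈ B := by
        rw [← mul_assoc] at hc
        rw [hc]
        have := hB.2 b hb ((c : M) * s)
        rwa [mul_comm, mul_assoc] at this
      have hd : (c : M) * t * a ∈ {m : M | Localization.mk m 1 ∈ I} := hsub ⟨hdA, hdB⟩
      have := hImul _ hd (Localization.mk 1 (c * t * s))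
      rw [Localization.mk_mul, mul_one] at this
      have heq : Localization.mk ((c : M) * t * a) (1 * (c * t * s)) = Localization.mk a s := by
        rw [Localization.mk_eq_mk_iff, Localization.r_iff_exists]
        refine ⟨1, ?_⟩
        push_cast
        simp [mul_comm, mul_assoc, mul_left_comm]
      rwa [heq] at this
    rcases hstr Ae Be (hideal A hA) (hideal B hB) hkey with h | h
    · left
      intro a ha
      exact h ⟨a, ha, 1, rfl⟩
    · right
      intro b hb
      exact h ⟨b, hb, 1, rfl⟩
end

section
/- Let M be a commutative monoid with zero, S a submonoid of M, and let M_S denote the localization of M at S. Let I be a strongly irreducible ideal of M such that I ∩ S = ∅ and such that I equals the contraction of its extension, i.e., I = {m ∈ M : mk(m,1) ∈ I_S} where I_S = {mk(i,s) : i ∈ I, s ∈ S}. Then I_S is a proper strongly irreducible ideal of M_S. -/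
/-- If `I` is a strongly irreducible ideal of `M` disjoint from `S` that
equals the contraction of its extension, then its extension `I_S` is a
proper strongly irreducible ideal of the localization `M_S`. -/
theorem extension_strongly_irreducible {M : Type*} [CommMonoidWithZero M]
    (S : Submonoid M) (I : Set M) (hI : IsIdeal I) (hstr : StrIrredCond I)
    (hdisj : I ∩ (S : Set M) = ∅)
    (hsat : I = {m : M |
      Localization.mk m 1 ∈ {x : Localization S | ∃ i ∈ I, ∃ s : S, x = Localization.mk i s}}) :
    IsIdeal {x : Localization S | ∃ i ∈ I, ∃ s : S, x = Localization.mk i s} ∧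
    {x : Localization S | ∃ i ∈ I, ∃ s : S, x = Localization.mk i s} ≠ Set.univ ∧
    StrIrredCond {x : Localization S | ∃ i ∈ I, ∃ s : S, x = Localization.mk i s} := by
  set E := {x : Localization S | ∃ i ∈ I, ∃ s : S, x = Localization.mk i s} with hE
  have key : ∀ (m : M) (s : S), Localization.mk m s * Localization.mk (s : M) 1
      = Localization.mk m 1 := by
    intro m s
    rw [Localization.mk_mul]
    exact Localization.mk_eq_mk_iff.mpr (Localization.r_iff_exists.mpr ⟨1, by
      simp [mul_comm, mul_assoc, mul_left_comm]⟩)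
  have hEideal : IsIdeal E := by
    constructor
    · obtain ⟨i, hi⟩ := hI.1
      exact ⟨Localization.mk i 1, i, hi, 1, rfl⟩
    · rintro x ⟨i, hi, s, rfl⟩ y
      induction y using Localization.ind with
      | _ p =>
        obtain ⟨m, t⟩ := p
        exact ⟨i * m, hI.2 i hi m, s * t, by rw [Localization.mk_mul]⟩
  have contr : ∀ A : Set (Localization S), IsIdeal A →
      IsIdeal {m : M | Localization.mk m 1 ∈ A} := by
    intro A hA
    constructor
    · obtain ⟨x, hx⟩ := hA.1
      induction x using Localization.ind with
      | _ p =>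
        obtain ⟨m, s⟩ := p
        refine ⟨m, ?_⟩
        have := hA.2 _ hx (Localization.mk (s : M) 1)
        rwa [key] at this
    · intro i hi m
      have := hA.2 _ hi (Localization.mk m 1)
      rwa [Localization.mk_mul, one_mul] at this
  have contrSub : ∀ A : Set (Localization S), IsIdeal A →
      {m : M | Localization.mk m 1 ∈ A} ⊆ I → A ⊆ E := by
    intro A hA hsub x hx
    induction x using Localization.ind with
    | _ p =>
      obtain ⟨m, s⟩ := p
      have h1 : Localization.mk m 1 ∈ A := by
        have := hA.2 _ hx (Localization.mk (s : M) 1)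
        rwa [key] at this
      exact ⟨m, hsub h1, s, rfl⟩
  refine ⟨hEideal, ?_, ?_⟩
  · intro h
    have h1 : Localization.mk (1 : M) 1 ∈ E := h ▸ Set.mem_univ _
    have : (1 : M) ∈ I := hsat ▸ h1
    have : (1 : M) ∈ I ∩ (S : Set M) := ⟨this, S.one_mem⟩
    rw [hdisj] at this
    exact this
  · intro A B hA hB hAB
    have hIcontr : {m : M | Localization.mk m 1 ∈ A} ∩ {m : M | Localization.mk m 1 ∈ B}
        ⊆ I := by
      intro m ⟨hmA, hmB⟩
      exact hsat ▸ hAB ⟨hmA, hmB⟩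
    rcases hstr _ _ (contr A hA) (contr B hB) hIcontr with h | h
    · exact Or.inl (contrSub A hA h)
    · exact Or.inr (contrSub B hB h)
end

section
/- Let M be a commutative monoid with zero, S a submonoid of M, and let M_S denote the localization of M at S. If I is a strongly irreducible primary ideal of M with I ∩ S = ∅, then the extension I_S = {mk(i,s) : i ∈ I, s ∈ S} is a proper ideal of M_S that is both strongly irreducible and primary. -/
/-- If `I` is a strongly irreducible primary ideal of `M` disjoint from `S`,
then its extension `I_S` is a proper ideal of the localization `M_S` that is
both strongly irreducible and primary. -/
theorem extension_strongly_irreducible_primary {M : Type*} [CommMonoidWithZero M]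
    (S : Submonoid M) (I : Set M) (hI : IsIdeal I) (hstr : StrIrredCond I)
    (hprimary : IsPrimaryIdeal I) (hdisj : I ∩ (S : Set M) = ∅) :
    IsIdeal {x : Localization S | ∃ i ∈ I, ∃ s : S, x = Localization.mk i s} ∧
    {x : Localization S | ∃ i ∈ I, ∃ s : S, x = Localization.mk i s} ≠ Set.univ ∧
    StrIrredCond {x : Localization S | ∃ i ∈ I, ∃ s : S, x = Localization.mk i s} ∧
    IsPrimaryIdeal {x : Localization S | ∃ i ∈ I, ∃ s : S, x = Localization.mk i s} := by
  obtain ⟨⟨i0, hi0⟩, hclosed⟩ := hI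
  obtain ⟨_, hIproper, hprim⟩ := hprimary
  set E : Set (Localization S) :=
    {x : Localization S | ∃ i ∈ I, ∃ s : S, x = Localization.mk i s} with hEdef
  have hdisj' : ∀ m : M, m ∈ I → m ∈ S → False := by
    intro m h1 h2
    have : m ∈ I ∩ (S : Set M) := ⟨h1, h2⟩
    rw [hdisj] at this
    exact this
  -- I is saturated with respect to S
  have hsat : ∀ (m : M) (c : S), (c : M) * m ∈ I → m ∈ I := by
    intro m c h
    rcases hprim m c (by rwa [mul_comm]) with h' | ⟨k, _, hck⟩
    · exact h'
    · exact absurd hck (fun hc => hdisj' _ hc (pow_mem c.2 k))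
  -- membership characterization for E
  have hmemE : ∀ (a : M) (s : S), Localization.mk a s ∈ E ↔ a ∈ I := by
    intro a s
    constructor
    · rintro ⟨i, hi, t, ht⟩
      rw [Localization.mk_eq_mk_iff, Localization.r_iff_exists] at ht
      obtain ⟨c, hc⟩ := ht
      have h2 : i * ((c : M) * (s : M)) ∈ I := hclosed i hi _
      have h3 : ((c : M) * (t : M)) * a = i * ((c : M) * (s : M)) := by
        rw [mul_assoc, hc]
        simp [mul_comm, mul_left_comm, mul_assoc]
      have h4 : ((c * t : S) : M) * a ∈ I := by
        rw [Submonoid.coe_mul, h3]; exact h2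
      exact hsat a (c * t) h4
    · intro ha
      exact ⟨a, ha, s, rfl⟩
  have hsurj : ∀ x : Localization S, ∃ (a : M) (s : S), x = Localization.mk a s :=
    fun x => Localization.ind (fun y => ⟨y.1, y.2, rfl⟩) x
  -- key: cancel the denominator inside an ideal
  have hmk1 : ∀ (a : M) (s : S),
      Localization.mk a s * Localization.mk (s : M) 1 = Localization.mk a 1 := by
    intro a s
    rw [Localization.mk_mul, Localization.mk_eq_mk_iff, Localization.r_iff_exists]
    exact ⟨1, by simp [mul_comm, mul_left_comm, mul_assoc]⟩
  -- E is an ideal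
  have hEideal : IsIdeal E := by
    constructor
    · exact ⟨Localization.mk i0 1, i0, hi0, 1, rfl⟩
    · rintro x ⟨i, hi, s, rfl⟩ m
      obtain ⟨b, t, rfl⟩ := hsurj m
      rw [Localization.mk_mul]
      exact ⟨i * b, hclosed i hi b, s * t, rfl⟩
  -- E is proper
  have hEproper : E ≠ Set.univ := by
    intro h
    have h1 : (1 : Localization S) ∈ E := h ▸ Set.mem_univ _
    rw [← Localization.mk_one] at h1
    have h2 : (1 : M) ∈ I := (hmemE 1 1).1 h1
    apply hIproper
    ext m
    simp only [Set.mem_univ, iff_true]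
    have := hclosed 1 h2 m
    rwa [one_mul] at this
  -- strong irreducibility
  have hEstr : StrIrredCond E := by
    intro A B hA hB hAB
    set A' : Set M := {m : M | Localization.mk m 1 ∈ A} with hA'def
    set B' : Set M := {m : M | Localization.mk m 1 ∈ B} with hB'def
    have contr_ideal : ∀ (J : Set (Localization S)), IsIdeal J →
        IsIdeal {m : M | Localization.mk m 1 ∈ J} := by
      intro J hJ
      constructor
      · obtain ⟨x, hx⟩ := hJ.1
        obtain ⟨a, s, rfl⟩ := hsurj x
        have : Localization.mk a 1 ∈ J := by
          rw [← hmk1 a s]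
          exact hJ.2 _ hx _
        exact ⟨a, this⟩
      · intro m hm n
        have := hJ.2 _ hm (Localization.mk n 1)
        rw [Localization.mk_mul] at this
        simpa using this
    have hsub : A' ∩ B' ⊆ I := by
      rintro m ⟨hmA, hmB⟩
      exact (hmemE m 1).1 (hAB ⟨hmA, hmB⟩)
    have hback : ∀ (J : Set (Localization S)), IsIdeal J →
        {m : M | Localization.mk m 1 ∈ J} ⊆ I → J ⊆ E := by
      intro J hJ hJ' x hx
      obtain ⟨a, s, rfl⟩ := hsurj x
      have : Localization.mk a 1 ∈ J := by
        rw [← hmk1 a s]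
        exact hJ.2 _ hx _
      exact (hmemE a s).2 (hJ' this)
    rcases hstr A' B' (contr_ideal A hA) (contr_ideal B hB) hsub with h | h
    · exact Or.inl (hback A hA h)
    · exact Or.inr (hback B hB h)
  refine ⟨hEideal, hEproper, hEstr, hEideal, hEproper, ?_⟩
  intro x y hxy
  obtain ⟨a, s, rfl⟩ := hsurj x
  obtain ⟨b, t, rfl⟩ := hsurj y
  rw [Localization.mk_mul] at hxy
  rcases hprim a b ((hmemE _ _).1 hxy) with h | ⟨k, hk, hbk⟩
  · exact Or.inl ((hmemE a s).2 h)
  · exact Or.inr ⟨k, hk, by rw [Localization.mk_pow]; exact (hmemE _ _).2 hbk⟩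
end

section
/- Let M be a nontrivial commutative monoid with zero, and let 𝔪 denote its unique maximal ideal (the set of non-invertible elements). The following are equivalent: (1) every primary ideal of the localization of M at the submonoid M∖𝔪 is irreducible; (2) every primary ideal of M is irreducible; (3) for every prime ideal P of M, every primary ideal of the localization of M at the submonoid M∖P is irreducible. -/
/-- The submonoid of invertible elements of `M`, i.e. the complement of the
unique maximal ideal `𝔪` of non-invertible elements. -/
def unitsSubmonoid (M : Type*) [CommMonoidWithZero M] : Submonoid M where
  carrier := {m : M | ∃ v : M, m * v = 1}
  one_mem' := ⟨1, one_mul 1⟩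
  mul_mem' := by
    rintro a b ⟨u, hu⟩ ⟨v, hv⟩
    exact ⟨u * v, by rw [mul_mul_mul_comm, hu, hv, one_mul]⟩

/-- The complement `M ∖ P` of a prime ideal `P`, as a submonoid of `M`. -/
def primeCompl {M : Type*} [CommMonoidWithZero M] (P : Set M)
    (hP : IsIdeal P) (hproper : P ≠ Set.univ)
    (hprime : ∀ x y : M, x * y ∈ P → x ∈ P ∨ y ∈ P) : Submonoid M where
  carrier := Pᶜ
  one_mem' := fun h1 => hproper (Set.eq_univ_of_forall fun m => by
    simpa using hP.2 1 h1 m)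
  mul_mem' := by
    intro a b ha hb hab
    exact (hprime a b hab).elim ha hb

section Aux

variable {M : Type*} [CommMonoidWithZero M]

/-- The canonical map into a localization of a commutative monoid. -/
private def locHom (S : Submonoid M) : M →* Localization S :=
  (Localization.monoidOf S).toMonoidHom

private lemma locHom_apply {S : Submonoid M} (m : M) :
    locHom S m = Localization.mk m 1 := (Localization.mk_one_eq_monoidOf_mk (S := S) m).symm

private lemma zero_mem_of_ideal {N : Type*} [CommMonoidWithZero N] {A : Set N}
    (hA : IsIdeal A) : (0 : N) ∈ A := by
  obtain ⟨a, ha⟩ := hA.1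
  simpa using hA.2 a ha 0

/-- Contraction is inclusion-reflecting on ideals of a localization. -/
private lemma subset_of_contraction_subset {S : Submonoid M} {A B : Set (Localization S)}
    (hA : IsIdeal A) (hB : IsIdeal B)
    (h : (locHom S) ⁻¹' A ⊆ (locHom S) ⁻¹' B) : A ⊆ B := by
  intro x hx
  induction x using Localization.ind with
  | _ y =>
    obtain ⟨m, s⟩ := y
    have h1 : Localization.mk m s * Localization.mk (s : M) 1 = locHom S m := by
      rw [locHom_apply, Localization.mk_mul, Localization.mk_eq_mk_iff,
        Localization.r_iff_exists]
      exact ⟨1, by simp [mul_comm, mul_assoc, mul_left_comm]⟩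
    have h2 : locHom S m ∈ A := h1 ▸ hA.2 _ hx _
    have h3 : locHom S m ∈ B := h h2
    have h4 : locHom S m * Localization.mk 1 s = Localization.mk m s := by
      rw [locHom_apply, Localization.mk_mul, Localization.mk_eq_mk_iff,
        Localization.r_iff_exists]
      exact ⟨1, by simp [mul_comm, mul_assoc, mul_left_comm]⟩
    exact h4 ▸ hB.2 _ h3 _

private lemma contraction_ideal {S : Submonoid M} {A : Set (Localization S)}
    (hA : IsIdeal A) : IsIdeal ((locHom S) ⁻¹' A) := by
  refine ⟨⟨0, ?_⟩, fun i hi m => ?_⟩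
  · show locHom S 0 ∈ A
    rw [locHom_apply, Localization.mk_zero]
    exact zero_mem_of_ideal hA
  · show locHom S (i * m) ∈ A
    rw [map_mul]
    exact hA.2 _ hi _

private lemma univ_of_one_mem {N : Type*} [CommMonoid N] {A : Set N}
    (hA : IsIdeal A) (h1 : (1 : N) ∈ A) : A = Set.univ :=
  Set.eq_univ_of_forall fun m => by simpa using hA.2 1 h1 m

private lemma contraction_primary {S : Submonoid M} {Q : Set (Localization S)}
    (hQ : IsPrimaryIdeal Q) : IsPrimaryIdeal ((locHom S) ⁻¹' Q) := by
  refine ⟨contraction_ideal hQ.1, fun h => ?_, fun x y hxy => ?_⟩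
  · apply hQ.2.1
    apply univ_of_one_mem hQ.1
    have : (1 : M) ∈ (locHom S) ⁻¹' Q := h ▸ Set.mem_univ 1
    simpa using this
  · have : locHom S x * locHom S y ∈ Q := by
      rw [← map_mul]; exact hxy
    rcases hQ.2.2 _ _ this with h | ⟨k, hk, hk2⟩
    · exact Or.inl h
    · exact Or.inr ⟨k, hk, by show locHom S (y ^ k) ∈ Q; rw [map_pow]; exact hk2⟩

/-- Transfer of the "primary implies irreducible" property to localizations. -/
private lemma locTransfer (S : Submonoid M)
    (h : ∀ Q : Set M, IsPrimaryIdeal Q → IrredCond Q) :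
    ∀ Q : Set (Localization S), IsPrimaryIdeal Q → IrredCond Q := by
  intro Q hQ I J hI hJ hQIJ
  have hQc := contraction_primary hQ
  have hcap : (locHom S) ⁻¹' Q = (locHom S) ⁻¹' I ∩ (locHom S) ⁻¹' J := by
    rw [hQIJ]; rfl
  rcases h _ hQc _ _ (contraction_ideal hI) (contraction_ideal hJ) hcap with hc | hc
  · left
    refine Set.Subset.antisymm (hQIJ ▸ Set.inter_subset_left) ?_
    exact subset_of_contraction_subset hI hQ.1 (le_of_eq hc.symm)
  · right
    refine Set.Subset.antisymm (hQIJ ▸ Set.inter_subset_right) ?_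
    exact subset_of_contraction_subset hJ hQ.1 (le_of_eq hc.symm)

/-- Transfer of the "primary implies irreducible" property along a `MulEquiv`. -/
private lemma equivTransfer {N N' : Type*} [CommMonoid N] [CommMonoid N'] (e : N ≃* N')
    (h : ∀ Q : Set N', IsPrimaryIdeal Q → IrredCond Q) :
    ∀ Q : Set N, IsPrimaryIdeal Q → IrredCond Q := by
  have himg : ∀ A : Set N, IsIdeal A → IsIdeal (e '' A) := by
    rintro A ⟨⟨a, ha⟩, hmul⟩
    refine ⟨⟨e a, a, ha, rfl⟩, ?_⟩
    rintro _ ⟨i, hi, rfl⟩ m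
    exact ⟨i * e.symm m, hmul i hi _, by simp⟩
  intro Q hQ I J hI hJ hQIJ
  have hQ' : IsPrimaryIdeal (e '' Q) := by
    refine ⟨himg _ hQ.1, fun hu => ?_, fun x y hxy => ?_⟩
    · apply hQ.2.1
      apply Set.eq_univ_of_forall fun m => ?_
      have : e m ∈ e '' Q := hu ▸ Set.mem_univ _
      obtain ⟨q, hq, hqe⟩ := this
      rwa [← e.injective hqe]
    · obtain ⟨q, hq, hqe⟩ := hxy
      have : e.symm x * e.symm y ∈ Q := by
        have : e.symm x * e.symm y = q := by
          apply e.injective; simpa using hqe.symm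
        rw [this]; exact hq
      rcases hQ.2.2 _ _ this with h1 | ⟨k, hk, hk2⟩
      · exact Or.inl ⟨_, h1, by simp⟩
      · exact Or.inr ⟨k, hk, ⟨_, hk2, by simp⟩⟩
  have hcap : e '' Q = e '' I ∩ e '' J := by
    rw [hQIJ, Set.image_inter e.injective]
  rcases h _ hQ' _ _ (himg _ hI) (himg _ hJ) hcap with hc | hc
  · exact Or.inl (Set.image_injective.2 e.injective hc)
  · exact Or.inr (Set.image_injective.2 e.injective hc)

/-- The identity is a localization map at the submonoid of units. -/
private noncomputable def unitsLocMap (M : Type*) [CommMonoidWithZero M] :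
    (unitsSubmonoid M).LocalizationMap M :=
  Submonoid.LocalizationMap.mk (MonoidHom.id M).toMulHom ⟨
    (fun y => by obtain ⟨v, hv⟩ := y.2; exact IsUnit.of_mul_eq_one v hv),
    (fun z => ⟨(z, 1), by simp⟩),
    (fun {x y} h => ⟨1, by simpa using h⟩)⟩

end Aux

/-- The following are equivalent: (1) every primary ideal of the localization
of `M` at `M ∖ 𝔪` is irreducible; (2) every primary ideal of `M` is
irreducible; (3) for every prime ideal `P` of `M`, every primary ideal of the
localization of `M` at `M ∖ P` is irreducible. -/
theorem primary_irreducible_tfae {M : Type*} [CommMonoidWithZero M] [Nontrivial M] :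
    ((∀ Q : Set (Localization (unitsSubmonoid M)), IsPrimaryIdeal Q → IrredCond Q) ↔
      (∀ Q : Set M, IsPrimaryIdeal Q → IrredCond Q)) ∧
    ((∀ Q : Set M, IsPrimaryIdeal Q → IrredCond Q) ↔
      (∀ (P : Set M) (hP : IsIdeal P) (hproper : P ≠ Set.univ)
        (hprime : ∀ x y : M, x * y ∈ P → x ∈ P ∨ y ∈ P),
        ∀ Q : Set (Localization (primeCompl P hP hproper hprime)),
          IsPrimaryIdeal Q → IrredCond Q)) := by
  have h12 : (∀ Q : Set (Localization (unitsSubmonoid M)), IsPrimaryIdeal Q → IrredCond Q) →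
      (∀ Q : Set M, IsPrimaryIdeal Q → IrredCond Q) :=
    fun h => equivTransfer (Localization.mulEquivOfQuotient (unitsLocMap M)).symm h
  refine ⟨⟨h12, fun h => locTransfer _ h⟩,
    ⟨fun h P hP hproper hprime => locTransfer _ h, fun h => ?_⟩⟩
  -- apply (3) at P = 𝔪
  set P : Set M := (unitsSubmonoid M : Set M)ᶜ with hPdef
  have hP : IsIdeal P := by
    refine ⟨⟨0, fun ⟨v, hv⟩ => ?_⟩, fun i hi m ⟨v, hv⟩ => ?_⟩
    · rw [zero_mul] at hv; exact zero_ne_one hv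
    · exact hi ⟨m * v, by rw [← mul_assoc]; exact hv⟩
  have hproper : P ≠ Set.univ := fun hu => by
    have : (1 : M) ∈ P := hu ▸ Set.mem_univ _
    exact this ⟨1, one_mul 1⟩
  have hprime : ∀ x y : M, x * y ∈ P → x ∈ P ∨ y ∈ P := by
    intro x y hxy
    by_contra hc
    push_neg at hc
    simp only [hPdef, Set.mem_compl_iff, not_not] at hc
    obtain ⟨u, hu⟩ := hc.1
    obtain ⟨v, hv⟩ := hc.2
    exact hxy ⟨u * v, by rw [mul_mul_mul_comm, hu, hv, one_mul]⟩
  have heq : primeCompl P hP hproper hprime = unitsSubmonoid M := by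
    ext m
    show m ∈ Pᶜ ↔ _
    simp [hPdef]
  have h3 := h P hP hproper hprime
  rw [heq] at h3
  exact h12 h3
end

section
/- Let M be a commutative monoid with zero. Then every ideal I of M equals the intersection of all irreducible ideals of M containing I, i.e., I = ⋂ {J : J is an irreducible ideal of M and I ⊆ J}. -/
/-- Every ideal `I` of a commutative monoid with zero is the intersection of
all irreducible ideals containing it. -/
theorem ideal_eq_iInter_irreducible {M : Type*} [CommMonoidWithZero M]
    (I : Set M) (hI : IsIdeal I) :
    I = ⋂₀ {J : Set M | IsIdeal J ∧ IrredCond J ∧ I ⊆ J} := by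
  apply Set.Subset.antisymm
  · intro x hx J hJ
    exact hJ.2.2 hx
  · intro a ha
    by_contra haI
    -- Zorn: find a maximal ideal containing I and avoiding a
    set S : Set (Set M) := {J : Set M | IsIdeal J ∧ I ⊆ J ∧ a ∉ J} with hS
    have hub : ∀ c ⊆ S, IsChain (· ⊆ ·) c → c.Nonempty → ∃ ub ∈ S, ∀ s ∈ c, s ⊆ ub := by
      intro c hcS hchain hcne
      refine ⟨⋃₀ c, ⟨⟨?_, ?_⟩, ?_, ?_⟩, fun s hs => Set.subset_sUnion_of_mem hs⟩
      · obtain ⟨t, ht⟩ := hcne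
        obtain ⟨x, hx⟩ := (hcS ht).1.1
        exact ⟨x, t, ht, hx⟩
      · rintro i ⟨t, ht, hit⟩ m
        exact ⟨t, ht, (hcS ht).1.2 i hit m⟩
      · obtain ⟨t, ht⟩ := hcne
        exact ((hcS ht).2.1).trans (Set.subset_sUnion_of_mem ht)
      · rintro ⟨t, ht, hat⟩
        exact (hcS ht).2.2 hat
    obtain ⟨L, hIL, hLmax⟩ := zorn_subset_nonempty S hub I ⟨hI, subset_rfl, haI⟩
    have hLS : L ∈ S := hLmax.prop
    have hLirr : IrredCond L := by
      intro A B hA hB hLAB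
      by_contra h
      push_neg at h
      obtain ⟨hLA, hLB⟩ := h
      have hLsubA : L ⊆ A := hLAB ▸ Set.inter_subset_left
      have hLsubB : L ⊆ B := hLAB ▸ Set.inter_subset_right
      have haA : a ∈ A := by
        by_contra haA
        exact hLA (Set.Subset.antisymm hLsubA
          (hLmax.2 ⟨hA, hIL.trans hLsubA, haA⟩ hLsubA))
      have haB : a ∈ B := by
        by_contra haB
        exact hLB (Set.Subset.antisymm hLsubB
          (hLmax.2 ⟨hB, hIL.trans hLsubB, haB⟩ hLsubB))
      exact hLS.2.2 (hLAB ▸ ⟨haA, haB⟩)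
    exact hLS.2.2 (ha L ⟨hLS.1, hLirr, hLS.2.1⟩)
end

section
/- Let M be a Noetherian commutative monoid with zero (i.e., M satisfies the ascending chain condition on ideals). Then every proper ideal of M can be written as the intersection of a finite nonempty family of ideals, each of which is both irreducible and primary. -/
section Aux
variable {M : Type*} [CommMonoidWithZero M]

def HasDecomp (I : Set M) : Prop :=
  ∃ (n : ℕ) (F : Fin (n + 1) → Set M),
    (∀ i, IrredCond (F i) ∧ IsPrimaryIdeal (F i)) ∧ I = ⋂ i, F i

lemma HasDecomp.inter {A B : Set M} (hA : HasDecomp A) (hB : HasDecomp B) :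
    HasDecomp (A ∩ B) := by
  classical
  obtain ⟨n, F, hF, rfl⟩ := hA
  obtain ⟨m, G, hG, rfl⟩ := hB
  refine ⟨n + 1 + m, fun i =>
    if h : (i : ℕ) < n + 1 then F ⟨i, h⟩
    else G ⟨(i : ℕ) - (n + 1), by have := i.isLt; omega⟩, ?_, ?_⟩
  · intro i
    by_cases h : (i : ℕ) < n + 1
    · simpa [h] using hF _
    · simpa [h] using hG _
  · ext x
    simp only [Set.mem_inter_iff, Set.mem_iInter]
    constructor
    · rintro ⟨h1, h2⟩ i
      by_cases h : (i : ℕ) < n + 1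
      · simpa [h] using h1 ⟨i, h⟩
      · simpa [h] using h2 ⟨(i : ℕ) - (n + 1), by have := i.isLt; omega⟩
    · intro h
      constructor
      · intro j
        have := h ⟨j, by have := j.isLt; omega⟩
        simpa [j.isLt] using this
      · intro j
        have := h ⟨n + 1 + (j : ℕ), by have := j.isLt; omega⟩
        rw [dif_neg (by simp only [Fin.val_mk]; omega)] at this
        simpa [Nat.add_sub_cancel_left] using this

lemma exists_maximal
    (hNoeth : ∀ f : ℕ → Set M, (∀ n, IsIdeal (f n)) → (∀ n, f n ⊆ f (n + 1)) →
      ∃ N : ℕ, ∀ n : ℕ, N ≤ n → f n = f N)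
    (S : Set (Set M)) (hS : ∀ I ∈ S, IsIdeal I) (hne : S.Nonempty) :
    ∃ I ∈ S, ∀ J ∈ S, I ⊆ J → J = I := by
  by_contra hcon
  push_neg at hcon
  have step : ∀ I : {I : Set M // I ∈ S}, ∃ J : {I : Set M // I ∈ S},
      I.1 ⊆ J.1 ∧ J.1 ≠ I.1 := by
    rintro ⟨I, hI⟩
    obtain ⟨J, hJ, hsub, hne'⟩ := hcon I hI
    exact ⟨⟨J, hJ⟩, hsub, hne'⟩
  choose g hg1 hg2 using step
  obtain ⟨I0, hI0⟩ := hne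
  let f : ℕ → {I : Set M // I ∈ S} := fun n => Nat.rec ⟨I0, hI0⟩ (fun _ p => g p) n
  obtain ⟨N, hN⟩ := hNoeth (fun n => (f n).1) (fun n => hS _ (f n).2)
    (fun n => hg1 (f n))
  exact hg2 (f N) (hN (N + 1) (by omega))

lemma irred_primary
    (hNoeth : ∀ f : ℕ → Set M, (∀ n, IsIdeal (f n)) → (∀ n, f n ⊆ f (n + 1)) →
      ∃ N : ℕ, ∀ n : ℕ, N ≤ n → f n = f N)
    {I : Set M} (hI : IsIdeal I) (hprop : I ≠ Set.univ) (hirr : IrredCond I) :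
    IsPrimaryIdeal I := by
  refine ⟨hI, hprop, ?_⟩
  intro x y hxy
  by_contra hc
  push_neg at hc
  obtain ⟨hx, hy⟩ := hc
  set C : ℕ → Set M := fun k => {m | m * y ^ k ∈ I} with hC
  have hCid : ∀ k, IsIdeal (C k) := by
    intro k
    obtain ⟨i, hi⟩ := hI.1
    refine ⟨⟨i, hI.2 i hi _⟩, ?_⟩
    intro a ha b
    have : (a * b) * y ^ k = (a * y ^ k) * b := by
      rw [mul_right_comm]
    simpa [hC, this] using hI.2 _ ha b
  have hmono : ∀ k, C k ⊆ C (k + 1) := by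
    intro k a ha
    have : a * y ^ (k + 1) = (a * y ^ k) * y := by
      rw [pow_succ, mul_assoc]
    simpa [hC, this] using hI.2 _ ha y
  obtain ⟨N, hN⟩ := hNoeth C hCid hmono
  set n := N + 1 with hn
  set J : Set M := I ∪ {z | ∃ m, z = y ^ n * m} with hJdef
  set K : Set M := I ∪ {z | ∃ m, z = x * m} with hKdef
  have hJ : IsIdeal J := by
    obtain ⟨i, hi⟩ := hI.1
    refine ⟨⟨i, Or.inl hi⟩, ?_⟩
    rintro a (ha | ⟨m, rfl⟩) b
    · exact Or.inl (hI.2 a ha b)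
    · exact Or.inr ⟨m * b, by rw [mul_assoc]⟩
  have hK : IsIdeal K := by
    obtain ⟨i, hi⟩ := hI.1
    refine ⟨⟨i, Or.inl hi⟩, ?_⟩
    rintro a (ha | ⟨m, rfl⟩) b
    · exact Or.inl (hI.2 a ha b)
    · exact Or.inr ⟨m * b, by rw [mul_assoc]⟩
  have hIJK : I = J ∩ K := by
    apply Set.Subset.antisymm
    · intro z hz; exact ⟨Or.inl hz, Or.inl hz⟩
    · rintro z ⟨hz1 | ⟨m, rfl⟩, hz2⟩
      · exact hz1
      · rcases hz2 with hz2 | ⟨m', he⟩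
        · exact hz2
        · have h3 : (y ^ n * m) * y ∈ I := by
            rw [he]
            have : (x * m') * y = (x * y) * m' := by
              rw [mul_right_comm]
            rw [this]
            exact hI.2 _ hxy m'
          have hm1 : m ∈ C (n + 1) := by
            have heq : m * y ^ (n + 1) = (y ^ n * m) * y := by
              rw [pow_succ, ← mul_assoc, mul_comm m]
            show m * y ^ (n + 1) ∈ I
            rw [heq]; exact h3
          have hm2 : m ∈ C n := by
            rw [hN n (by omega)]
            rw [hN (n + 1) (by omega)] at hm1
            exact hm1
          have : m * y ^ n ∈ I := hm2
          rwa [mul_comm] at this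
  rcases hirr J K hJ hK hIJK with h | h
  · refine hy n (by omega) ?_
    have : y ^ n ∈ J := Or.inr ⟨1, (mul_one _).symm⟩
    rwa [← h] at this
  · refine hx ?_
    have : x ∈ K := Or.inr ⟨1, (mul_one _).symm⟩
    rwa [← h] at this

end Aux

/-- In a Noetherian commutative monoid with zero, every proper ideal is a
finite intersection of irreducible primary ideals. -/
theorem noetherian_irreducible_primary_decomposition {M : Type*} [CommMonoidWithZero M]
    (hNoeth : ∀ f : ℕ → Set M, (∀ n, IsIdeal (f n)) → (∀ n, f n ⊆ f (n + 1)) →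
      ∃ N : ℕ, ∀ n : ℕ, N ≤ n → f n = f N) :
    ∀ I : Set M, IsIdeal I → I ≠ Set.univ →
      ∃ (n : ℕ) (F : Fin (n + 1) → Set M),
        (∀ i, IrredCond (F i) ∧ IsPrimaryIdeal (F i)) ∧ I = ⋂ i, F i := by
  classical
  by_contra hcon
  push_neg at hcon
  obtain ⟨I, hIideal, hIproper, hIno⟩ := hcon
  have hInd : ¬ HasDecomp I := by
    rintro ⟨n, F, h1, h2⟩
    exact hIno n F h1 h2
  set S : Set (Set M) := {J | IsIdeal J ∧ J ≠ Set.univ ∧ ¬ HasDecomp J} with hSdef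
  obtain ⟨L, hLS, hLmax⟩ := exists_maximal hNoeth S (fun J hJ => hJ.1)
    ⟨I, hIideal, hIproper, hInd⟩
  obtain ⟨hLid, hLprop, hLno⟩ := hLS
  by_cases hirr : IrredCond L
  · apply hLno
    unfold HasDecomp
    exact ⟨0, fun _ => L, fun _ => ⟨hirr, irred_primary hNoeth hLid hLprop hirr⟩,
      (Set.iInter_const L).symm⟩
  · unfold IrredCond at hirr
    push_neg at hirr
    obtain ⟨A, B, hAid, hBid, hLAB, hLA, hLB⟩ := hirr
    have hAprop : A ≠ Set.univ := by
      rintro rfl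
      exact hLB (by rw [hLAB, Set.univ_inter])
    have hBprop : B ≠ Set.univ := by
      rintro rfl
      exact hLA (by rw [hLAB, Set.inter_univ])
    have hLsubA : L ⊆ A := hLAB ▸ Set.inter_subset_left
    have hLsubB : L ⊆ B := hLAB ▸ Set.inter_subset_right
    have hAdec : HasDecomp A := by
      by_contra hA
      exact hLA (hLmax A ⟨hAid, hAprop, hA⟩ hLsubA).symm
    have hBdec : HasDecomp B := by
      by_contra hB
      exact hLB (hLmax B ⟨hBid, hBprop, hB⟩ hLsubB).symm
    exact hLno (hLAB ▸ hAdec.inter hBdec)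
end

section
/- Let M be a commutative monoid with zero in which every primary ideal is strongly irreducible. Let I be a proper ideal of M admitting two minimal primary decompositions, i.e., two finite nonempty families 𝒫 and 𝒬 of primary ideals of M with I = ⋂ 𝒫 = ⋂ 𝒬, where minimality means that no member of the family contains the intersection of the remaining members. Then 𝒫 = 𝒬 as sets (in particular they have the same number of members). -/
lemma zero_mem_of_isIdeal {M : Type*} [CommMonoidWithZero M] {I : Set M}
    (h : IsIdeal I) : (0 : M) ∈ I := by
  obtain ⟨i, hi⟩ := h.1
  have := h.2 i hi 0
  rwa [mul_zero] at this

lemma isIdeal_biInter {M : Type*} [CommMonoidWithZero M] (S : Finset (Set M))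
    (hS : ∀ s ∈ S, IsIdeal s) : IsIdeal (⋂ s ∈ S, s) := by
  constructor
  · exact ⟨0, Set.mem_biInter fun s hs => zero_mem_of_isIdeal (hS s hs)⟩
  · intro i hi m
    exact Set.mem_biInter fun s hs =>
      (hS s hs).2 i (Set.mem_iInter₂.mp hi s hs) m

lemma strIrred_finset {M : Type*} [CommMonoidWithZero M] {L : Set M}
    (hL : StrIrredCond L) (S : Finset (Set M)) (hne : S.Nonempty)
    (hS : ∀ s ∈ S, IsIdeal s) (hsub : (⋂ s ∈ S, s) ⊆ L) :
    ∃ s ∈ S, s ⊆ L := by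
  classical
  induction S using Finset.induction with
  | empty => exact absurd rfl (Finset.nonempty_iff_ne_empty.mp hne)
  | @insert a T ha ih =>
    rcases T.eq_empty_or_nonempty with rfl | hTne
    · refine ⟨a, Finset.mem_insert_self _ _, ?_⟩
      simpa using hsub
    · have hT : ∀ s ∈ T, IsIdeal s := fun s hs => hS s (Finset.mem_insert_of_mem hs)
      have hInter : a ∩ (⋂ s ∈ T, s) ⊆ L := by
        intro x hx
        apply hsub
        refine Set.mem_biInter fun s hs => ?_
        rcases Finset.mem_insert.mp hs with rfl | hs
        · exact hx.1
        · exact Set.mem_iInter₂.mp hx.2 s hs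
      rcases hL a (⋂ s ∈ T, s) (hS a (Finset.mem_insert_self _ _))
        (isIdeal_biInter T hT) hInter with h | h
      · exact ⟨a, Finset.mem_insert_self _ _, h⟩
      · obtain ⟨s, hs, hsL⟩ := ih hTne hT h
        exact ⟨s, Finset.mem_insert_of_mem hs, hsL⟩

open Classical in
/-- In a commutative monoid with zero in which every primary ideal is
strongly irreducible, any two minimal primary decompositions of a proper
ideal coincide as sets. -/
theorem minimal_primary_decomposition_unique {M : Type*} [CommMonoidWithZero M]
    (hyp : ∀ P : Set M, IsPrimaryIdeal P → StrIrredCond P)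
    (I : Set M) (hI : IsIdeal I) (hproper : I ≠ Set.univ)
    (P Q : Finset (Set M)) (hPne : P.Nonempty) (hQne : Q.Nonempty)
    (hPprim : ∀ p ∈ P, IsPrimaryIdeal p) (hQprim : ∀ q ∈ Q, IsPrimaryIdeal q)
    (hIP : I = ⋂ p ∈ P, p) (hIQ : I = ⋂ q ∈ Q, q)
    (hPmin : ∀ p ∈ P, ¬ (⋂ q ∈ P.erase p, q) ⊆ p)
    (hQmin : ∀ q ∈ Q, ¬ (⋂ p ∈ Q.erase q, p) ⊆ q) :
    P = Q := by
  have key : ∀ (A B : Finset (Set M)), A.Nonempty → B.Nonempty →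
      (∀ p ∈ A, IsPrimaryIdeal p) → (∀ q ∈ B, IsPrimaryIdeal q) →
      (⋂ p ∈ A, p) = (⋂ q ∈ B, q) →
      (∀ p ∈ A, ¬ (⋂ q ∈ A.erase p, q) ⊆ p) →
      A ⊆ B := by
    intro A B hAne hBne hAprim hBprim hAB hAmin p hp
    have hppr := hAprim p hp
    have hBsub : (⋂ q ∈ B, q) ⊆ p := by
      rw [← hAB]; exact Set.biInter_subset_of_mem hp
    obtain ⟨q, hq, hqp⟩ := strIrred_finset (hyp p hppr) B hBne
      (fun s hs => (hBprim s hs).1) hBsub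
    have hAsub : (⋂ r ∈ A, r) ⊆ q := by
      rw [hAB]; exact Set.biInter_subset_of_mem hq
    obtain ⟨p', hp', hp'q⟩ := strIrred_finset (hyp q (hBprim q hq)) A hAne
      (fun s hs => (hAprim s hs).1) hAsub
    by_cases hpp : p' = p
    · rw [hpp] at hp'q
      have : p = q := Set.Subset.antisymm hp'q hqp
      rwa [this]
    · exfalso
      apply hAmin p hp
      have : (⋂ r ∈ A.erase p, r) ⊆ p' :=
        Set.biInter_subset_of_mem (Finset.mem_erase.mpr ⟨hpp, hp'⟩)
      exact this.trans (hp'q.trans hqp)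
  exact Finset.Subset.antisymm
    (key P Q hPne hQne hPprim hQprim (by rw [← hIP, ← hIQ]) hPmin)
    (key Q P hQne hPne hQprim hPprim (by rw [← hIP, ← hIQ]) hQmin)
end
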